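/- Let G be a finite group, A a commutative unital ring, and T ⊆ G a set containing exactly one representative from each conjugacy class of G. For g ∈ G let ad_g denote the inner derivation x ↦ ĝx − xĝ of A[G]. Then the family (ad_g)_{g ∈ G \ T} is a basis of the A-module Inn(A[G]) of inner derivations; in particular Inn(A[G]) is a free A-module. -/

import Mathlib

open MonoidAlgebra

/-- The A-submodule of inner derivations of the group ring `A[G]`, inside the
`A`-module of all `A`-linear endomorphisms of `A[G]`. -/
def innDer (A G : Type) [CommRing A] [Group G] :
    Submodule A (MonoidAlgebra A G →ₗ[A] MonoidAlgebra A G) where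
  carrier := {d | ∃ a : MonoidAlgebra A G, ∀ x : MonoidAlgebra A G, d x = a * x - x * a}
  add_mem' := by
    rintro d e ⟨a, ha⟩ ⟨b, hb⟩
    refine ⟨a + b, fun x => ?_⟩
    simp only [LinearMap.add_apply, ha x, hb x, add_mul, mul_add]
    abel
  zero_mem' := ⟨0, fun x => by simp⟩
  smul_mem' := by
    rintro c d ⟨a, ha⟩
    refine ⟨c • a, fun x => ?_⟩
    simp only [LinearMap.smul_apply, ha x, smul_sub, smul_mul_assoc, mul_smul_comm]


section Aux

variable {A G : Type} [CommRing A] [Group G]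

/-- The adjoint map `a ↦ (x ↦ a*x - x*a)` as a linear map. -/
noncomputable def adL : MonoidAlgebra A G →ₗ[A] (MonoidAlgebra A G →ₗ[A] MonoidAlgebra A G) :=
  LinearMap.mul A (MonoidAlgebra A G) - (LinearMap.mul A (MonoidAlgebra A G)).flip

@[simp] lemma adL_apply (a x : MonoidAlgebra A G) : adL a x = a * x - x * a := by
  simp [adL]

lemma classfn_comm (b : MonoidAlgebra A G)
    (hb : ∀ g h : G, b.coeff (h * g * h⁻¹) = b.coeff g) (x : MonoidAlgebra A G) : b * x = x * b := by
  have h1 : LinearMap.mulLeft A b = LinearMap.mulRight A b := by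
    apply MonoidAlgebra.lhom_ext' (fun h => LinearMap.ext fun r => ?_)
    show b * MonoidAlgebra.single h r = MonoidAlgebra.single h r * b
    refine MonoidAlgebra.ext (Finsupp.ext fun g => ?_)
    rw [MonoidAlgebra.coeff_mul_single_apply, MonoidAlgebra.coeff_single_mul_apply]
    have h2 : b.coeff (g * h⁻¹) = b.coeff (h⁻¹ * g) := by
      have := hb (g * h⁻¹) h⁻¹
      simpa [mul_assoc] using this.symm
    rw [h2, mul_comm]
  have h2 : (LinearMap.mulLeft A b) x = (LinearMap.mulRight A b) x := by rw [h1]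
  simpa [LinearMap.mulLeft_apply, LinearMap.mulRight_apply] using h2

lemma central_classfn (b : MonoidAlgebra A G)
    (hb : ∀ x : MonoidAlgebra A G, b * x = x * b) (g h : G) : b.coeff (h * g * h⁻¹) = b.coeff g := by
  have h1 := hb (MonoidAlgebra.single h (1 : A))
  have h2 : (b * MonoidAlgebra.single h (1 : A)).coeff (h * g) =
      (MonoidAlgebra.single h (1 : A) * b).coeff (h * g) := by rw [h1]
  rw [MonoidAlgebra.coeff_mul_single_apply, MonoidAlgebra.coeff_single_mul_apply] at h2
  simpa [mul_assoc] using h2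

variable (T : Set G) (hT : ∀ g : G, ∃! t, t ∈ T ∧ IsConj g t)

/-- The chosen representative of the conjugacy class of `g`. -/
noncomputable def rep (g : G) : G := (hT g).choose

lemma rep_mem (g : G) : rep T hT g ∈ T := (hT g).choose_spec.1.1

lemma isConj_rep (g : G) : IsConj g (rep T hT g) := (hT g).choose_spec.1.2

lemma rep_eq (g t : G) (ht : t ∈ T) (hc : IsConj g t) : t = rep T hT g :=
  (hT g).choose_spec.2 t ⟨ht, hc⟩

lemma rep_conj (g h : G) : rep T hT (h * g * h⁻¹) = rep T hT g := by
  refine (rep_eq T hT (h * g * h⁻¹) _ (rep_mem T hT g) ?_).symm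
  exact IsConj.trans (isConj_iff.mpr ⟨h⁻¹, by group⟩) (isConj_rep T hT g)

lemma rep_self (g : G) (hg : g ∈ T) : rep T hT g = g :=
  (rep_eq T hT g g hg (IsConj.refl g)).symm

end Aux

/-- **Basis of the module of inner derivations.**
If `T ⊆ G` contains exactly one representative of each conjugacy class of the finite
group `G`, then the adjoint derivations `ad_g = (x ↦ ĝx − xĝ)` for `g ∈ G \ T` form a
basis of the `A`-module of inner derivations of `A[G]`; in particular this module is
free. -/
theorem innDer_basis
    (A G : Type) [CommRing A] [Group G] [Finite G]
    (T : Set G) (hT : ∀ g : G, ∃! t, t ∈ T ∧ IsConj g t) :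
    (∃ b : Module.Basis {g : G // g ∉ T} A ↥(innDer A G),
      ∀ g : {g : G // g ∉ T},
        (b g : MonoidAlgebra A G →ₗ[A] MonoidAlgebra A G) =
          LinearMap.mulLeft A (MonoidAlgebra.of A G g.1) -
            LinearMap.mulRight A (MonoidAlgebra.of A G g.1)) ∧
      Module.Free A ↥(innDer A G) := by
  classical
  set ι := {g : G // g ∉ T}
  -- embedding of finitely supported functions on ι into the group algebra
  let emb : (ι →₀ A) →ₗ[A] MonoidAlgebra A G :=
    { toFun := fun c => MonoidAlgebra.ofCoeff (Finsupp.mapDomain Subtype.val c)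
      map_add' := fun c d => by rw [Finsupp.mapDomain_add]; rfl
      map_smul' := fun r c => by rw [Finsupp.mapDomain_smul]; rfl }
  have emb_inj : Function.Injective emb :=
    fun c d h => Finsupp.mapDomain_injective Subtype.val_injective (congrArg MonoidAlgebra.coeff h)
  have emb_T : ∀ (c : ι →₀ A) (t : G), t ∈ T → (emb c).coeff t = 0 := by
    intro c t ht
    refine Finsupp.mapDomain_notin_range _ _ ?_
    rw [Subtype.range_coe_subtype]
    exact fun h => h ht
  have emb_apply : ∀ (c : ι →₀ A) (g : ι), (emb c).coeff g.1 = c g :=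
    fun c g => Finsupp.mapDomain_apply Subtype.val_injective c g
  -- the map Φ
  let Φ : (ι →₀ A) →ₗ[A] ↥(innDer A G) :=
    LinearMap.codRestrict (innDer A G) (adL.comp emb)
      (fun c => ⟨emb c, fun x => by simp⟩)
  have Φ_val : ∀ c : ι →₀ A, (Φ c : MonoidAlgebra A G →ₗ[A] MonoidAlgebra A G) = adL (emb c) :=
    fun c => rfl
  have hinj : Function.Injective Φ := by
    intro c d hcd
    have h0 : adL (emb c - emb d) = 0 := by
      have h0' : adL (emb c) = adL (emb d) := by
        have := congrArg (Subtype.val) hcd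
        rwa [Φ_val, Φ_val] at this
      rw [map_sub, h0', sub_self]
    set e : MonoidAlgebra A G := emb c - emb d with he
    have hcomm : ∀ x : MonoidAlgebra A G, e * x = x * e := by
      intro x
      have := LinearMap.congr_fun h0 x
      simp only [adL_apply, LinearMap.zero_apply, sub_eq_zero] at this
      exact this
    have hcls := central_classfn e hcomm
    have hzero : e = 0 := by
      refine MonoidAlgebra.ext (Finsupp.ext fun g => ?_)
      obtain ⟨h, hh⟩ := isConj_iff.mp (isConj_rep T hT g)
      have he1 : e.coeff g = e.coeff (rep T hT g) := by rw [← hh, hcls]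
      have he2 : e.coeff (rep T hT g) = 0 := by
        rw [he, MonoidAlgebra.coeff_sub, Finsupp.sub_apply, emb_T c _ (rep_mem T hT g), emb_T d _ (rep_mem T hT g),
          sub_self]
      rw [he1, he2, MonoidAlgebra.coeff_zero, Finsupp.zero_apply]
    have hed : emb c = emb d := by
      have := sub_eq_zero.mp (he ▸ hzero)
      exact this
    exact emb_inj hed
  have hsurj : Function.Surjective Φ := by
    rintro ⟨d, a, ha⟩
    have hfin : Finite ι := Subtype.finite
    let c : ι →₀ A := Finsupp.equivFunOnFinite.symm (fun g : ι => a.coeff g.1 - a.coeff (rep T hT g.1))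
    have hc : ∀ g : ι, c g = a.coeff g.1 - a.coeff (rep T hT g.1) := fun g => rfl
    let aRep : MonoidAlgebra A G :=
      MonoidAlgebra.ofCoeff (Finsupp.equivFunOnFinite.symm (fun g : G => a.coeff (rep T hT g)))
    have haRep : ∀ g : G, aRep.coeff g = a.coeff (rep T hT g) := fun g => rfl
    have hdecomp : emb c = a - aRep := by
      refine MonoidAlgebra.ext (Finsupp.ext fun g => ?_)
      by_cases hg : g ∈ T
      · rw [emb_T c g hg, MonoidAlgebra.coeff_sub, Finsupp.sub_apply, haRep, rep_self T hT g hg, sub_self]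
      · rw [emb_apply c ⟨g, hg⟩, hc, MonoidAlgebra.coeff_sub, Finsupp.sub_apply, haRep]
    refine ⟨c, ?_⟩
    apply Subtype.ext
    rw [Φ_val, hdecomp, map_sub]
    have hRep0 : adL aRep = 0 := by
      refine LinearMap.ext fun x => ?_
      rw [adL_apply, LinearMap.zero_apply,
        classfn_comm aRep (fun g h => by rw [haRep, haRep, rep_conj]) x, sub_self]
    rw [hRep0, sub_zero]
    exact (LinearMap.ext fun x => by rw [ha x, adL_apply]).symm
  let e := LinearEquiv.ofBijective Φ ⟨hinj, hsurj⟩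
  let b : Module.Basis ι A ↥(innDer A G) := Module.Basis.ofRepr e.symm
  refine ⟨⟨b, fun g => ?_⟩, Module.Free.of_basis b⟩
  have hb : b g = Φ (Finsupp.single g 1) := by
    have : b g = b.repr.symm (Finsupp.single g 1) := (b.repr_symm_single_one g).symm
    rw [this]
    rfl
  rw [hb, Φ_val]
  have : emb (Finsupp.single g 1) = MonoidAlgebra.single g.1 (1 : A) := by
    show MonoidAlgebra.ofCoeff _ = _
    rw [Finsupp.mapDomain_single]
    rfl
  rw [this]
  refine LinearMap.ext fun x => ?_
  rw [adL_apply, LinearMap.sub_apply, LinearMap.mulLeft_apply, LinearMap.mulRight_apply,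
    MonoidAlgebra.of_apply]
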